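/- Let a and b be positive integers with a + b > 2, and let x be a real number with x > 2. Then P_a(x)·P_b(x) > P_{a+b}(x). -/

import Mathlib

open Polynomial Finset

/-- The polynomials `P n` defined by `P 0 = 1` and
`n * P n = X * ∑_{k=1}^n σ(k) * P (n-k)`, i.e. the coefficients of
`∏ (1 - q^j)^{-x} = ∑ P_n(x) q^n`. -/
noncomputable def P : ℕ → Polynomial ℝ
  | 0 => 1
  | n + 1 => ((n + 1 : ℝ)⁻¹) • (X * ∑ k ∈ Finset.range (n + 1),
      ((∑ d ∈ (k + 1).divisors, d : ℕ) : ℝ) • P (n - k))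

/-- `Δ a b = P (a-1) * P (b+1) - P a * P b`. -/
noncomputable def Δ (a b : ℕ) : Polynomial ℝ :=
  P (a - 1) * P (b + 1) - P a * P b

def s (k : ℕ) : ℕ := ∑ d ∈ k.divisors, d

noncomputable def p (n : ℕ) (x : ℝ) : ℝ := (P n).eval x

lemma p_zero (x : ℝ) : p 0 x = 1 := by simp [p, P]

lemma p_rec (n : ℕ) (x : ℝ) :
    ((n:ℝ)+1) * p (n+1) x = x * ∑ k ∈ Finset.range (n+1),
      (s (k+1) : ℝ) * p (n - k) x := by
  have h : p (n+1) x = ((n + 1 : ℝ)⁻¹) * (x * ∑ k ∈ Finset.range (n+1),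
      ((∑ d ∈ (k + 1).divisors, d : ℕ) : ℝ) * p (n - k) x) := by
    simp [p, P, eval_finset_sum, mul_comm]
  rw [h]
  have : ((n:ℝ)+1) ≠ 0 := by positivity
  field_simp [s]
  rfl

lemma s_ge_self {k : ℕ} (hk : 1 ≤ k) : k ≤ s k := by
  have : k ∈ k.divisors := Nat.mem_divisors_self k (by omega)
  exact Finset.single_le_sum (fun d _ => Nat.zero_le d) this

lemma s_pos {k : ℕ} (hk : 1 ≤ k) : 1 ≤ s k := le_trans hk (s_ge_self hk)

lemma p_pos {x : ℝ} (hx : 0 < x) : ∀ n, 0 < p n x := by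
  intro n
  induction n using Nat.strong_induction_on with
  | _ n ih =>
    match n with
    | 0 => simp [p_zero]
    | Nat.succ m =>
      have h := p_rec m x
      have hsum : 0 < ∑ k ∈ Finset.range (m+1), (s (k+1) : ℝ) * p (m - k) x := by
        apply Finset.sum_pos
        · intro k hk
          have h1 : (1:ℝ) ≤ (s (k+1) : ℝ) := by exact_mod_cast s_pos (by omega)
          have h2 : 0 < p (m - k) x := ih (m-k) (by omega)
          nlinarith
        · exact ⟨0, by simp⟩
      nlinarith [h, mul_pos hx hsum]

lemma p_one (x : ℝ) : p 1 x = x := by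
  have h := p_rec 0 x
  simp [s, p_zero] at h
  linarith

lemma p_mono {x : ℝ} (hx : 2 ≤ x) : ∀ n, p n x ≤ p (n+1) x := by
  intro n
  induction n using Nat.strong_induction_on with
  | _ n ih =>
    match n with
    | 0 => rw [p_zero, p_one]; linarith
    | Nat.succ m =>
      show p (m+1) x ≤ p (m+1+1) x
      have rec1 := p_rec (m+1) x
      have rec2 := p_rec m x
      rw [Finset.sum_range_succ, Nat.sub_self, p_zero] at rec1
      have key : x * ∑ k ∈ Finset.range (m+1), (s (k+1) : ℝ) * p (m+1-k) x
          - x * ∑ k ∈ Finset.range (m+1), (s (k+1) : ℝ) * p (m-k) x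
          = ∑ j ∈ Finset.range (m+1), (x * (s (m+1-j) : ℝ)) * (p (j+1) x - p j x) := by
        have hrefl : ∑ j ∈ Finset.range (m+1),
            (x * (s (m+1-((m+1)-1-j)) : ℝ)) * (p (((m+1)-1-j)+1) x - p ((m+1)-1-j) x)
            = ∑ j ∈ Finset.range (m+1), (x * (s (m+1-j) : ℝ)) * (p (j+1) x - p j x) :=
          Finset.sum_range_reflect (fun j => (x * (s (m+1-j) : ℝ)) * (p (j+1) x - p j x)) (m+1)
        rw [← hrefl, Finset.mul_sum, Finset.mul_sum, ← Finset.sum_sub_distrib]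
        apply Finset.sum_congr rfl
        intro k hk
        simp only [Finset.mem_range] at hk
        have e1 : (m+1)-1-k = m - k := by omega
        have e2 : m+1-(m-k) = k+1 := by omega
        have e3 : (m-k)+1 = m+1-k := by omega
        rw [e1, e2, e3]
        ring
      have tel : ∑ i ∈ Finset.range (m+1), (p (i+1) x - p i x) = p (m+1) x - 1 := by
        rw [Finset.sum_range_sub (fun i => p i x) (m+1), p_zero]
      have hterms : p (m+1) x - 1 ≤ ∑ j ∈ Finset.range (m+1), (x * (s (m+1-j) : ℝ)) * (p (j+1) x - p j x) := by
        rw [← tel]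
        apply Finset.sum_le_sum
        intro j hj
        simp only [Finset.mem_range] at hj
        have h1 : (1:ℝ) ≤ (s (m+1-j) : ℝ) := by exact_mod_cast s_pos (by omega)
        have h2 : 0 ≤ p (j+1) x - p j x := by have := ih j (by omega); linarith
        have h3 : (1:ℝ) ≤ x * (s (m+1-j) : ℝ) := by nlinarith
        nlinarith
      have hlast : (2:ℝ) ≤ x * (s (m+1+1) : ℝ) := by
        have h1 : (1:ℝ) ≤ (s (m+1+1) : ℝ) := by exact_mod_cast s_pos (by omega)
        nlinarith
      push_cast at rec1 rec2
      have hA : (0:ℝ) < (m:ℝ)+2 := by positivity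
      have hineq : ((m:ℝ)+2) * p (m+1) x ≤ ((m:ℝ)+2) * p (m+1+1) x := by nlinarith
      exact le_of_mul_le_mul_left hineq hA

lemma sum_insert_le' (a : ℕ) (t : Finset ℕ) : ∑ d ∈ insert a t, d ≤ a + ∑ d ∈ t, d := by
  by_cases h : a ∈ t
  · rw [Finset.insert_eq_self.mpr h]; exact Nat.le_add_left _ a
  · rw [Finset.sum_insert h]

lemma gauss_icc (k : ℕ) : (∑ d ∈ Finset.Icc 1 k, d) * 2 = k*k + k := by
  induction k with
  | zero => simp
  | succ t ih =>
    rw [Finset.sum_Icc_succ_top (by omega : 1 ≤ t+1)]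
    nlinarith [ih]

lemma s_le18 (m : ℕ) : 18 * s m ≤ m^2 + 30*m := by
  rcases Nat.eq_zero_or_pos m with rfl | hm
  · simp [s]
  set k := m/3 with hk
  have hsub : m.divisors ⊆ insert m (insert (m/2) (Finset.Icc 1 k)) := by
    intro d hd
    rcases Nat.mem_divisors.mp hd with ⟨hdvd, hm0⟩
    obtain ⟨e, he⟩ := hdvd
    simp only [Finset.mem_insert, Finset.mem_Icc]
    have hd0 : 0 < d := Nat.pos_of_mem_divisors hd
    match e, he with
    | 0, he => omega
    | 1, he => left; omega
    | 2, he => right; left; omega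
    | (e+3), he =>
      right; right
      refine ⟨hd0, ?_⟩
      have h3 : d * 3 ≤ d * (e+3) := Nat.mul_le_mul_left d (by omega)
      rw [Nat.le_div_iff_mul_le (by norm_num)]
      omega
  have h1 : s m ≤ m + (m/2 + ∑ d ∈ Finset.Icc 1 k, d) := by
    calc s m ≤ ∑ d ∈ insert m (insert (m/2) (Finset.Icc 1 k)), d :=
          Finset.sum_le_sum_of_subset hsub
      _ ≤ m + ∑ d ∈ insert (m/2) (Finset.Icc 1 k), d := sum_insert_le' _ _
      _ ≤ m + (m/2 + ∑ d ∈ Finset.Icc 1 k, d) :=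
          Nat.add_le_add_left (sum_insert_le' _ _) m
  have h2 := gauss_icc k
  have h3 : 3 * k ≤ m := by omega
  have h4 : 9 * (k * k) ≤ m * m := by nlinarith
  have h5 : 2 * (m/2) ≤ m := by omega
  nlinarith [h1, h2, h4, h3, h5]

lemma s_le_real (m : ℕ) : (s m : ℝ) ≤ (m:ℝ)^2/18 + 5*(m:ℝ)/3 := by
  have := s_le18 m
  have h : (18 * s m : ℝ) ≤ ((m:ℝ)^2 + 30*(m:ℝ)) := by exact_mod_cast this
  linarith

lemma s_1 : s 1 = 1 := by decide
lemma s_2 : s 2 = 3 := by decide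
lemma s_3 : s 3 = 4 := by decide
lemma s_4 : s 4 = 7 := by decide
lemma s_5 : s 5 = 6 := by decide
lemma s_6 : s 6 = 12 := by decide
lemma s_7 : s 7 = 8 := by decide
lemma s_8 : s 8 = 15 := by decide
lemma s_9 : s 9 = 13 := by decide
lemma s_10 : s 10 = 18 := by decide
lemma s_11 : s 11 = 12 := by decide
lemma s_12 : s 12 = 28 := by decide
lemma s_13 : s 13 = 14 := by decide
lemma s_14 : s 14 = 24 := by decide
lemma s_15 : s 15 = 24 := by decide
lemma s_16 : s 16 = 31 := by decide
lemma s_17 : s 17 = 18 := by decide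

lemma low_1 {x : ℝ} (hx : 2 ≤ x) : (x/2) * 2 ≤ p 1 x := by rw [p_one]; linarith
lemma low_2 {x : ℝ} (hx : 2 ≤ x) : (x/2) * 5 ≤ p 2 x := by
  have hx0 : (0:ℝ) ≤ x := by linarith
  have h := p_rec 1 x
  norm_num [Finset.sum_range_succ, p_zero, s_1, s_2] at h
  nlinarith [h, mul_le_mul_of_nonneg_left (low_1 hx) hx0, mul_nonneg hx0 (by linarith : (0:ℝ) ≤ x - 2)]
lemma low_3 {x : ℝ} (hx : 2 ≤ x) : (x/2) * 10 ≤ p 3 x := by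
  have hx0 : (0:ℝ) ≤ x := by linarith
  have h := p_rec 2 x
  norm_num [Finset.sum_range_succ, p_zero, s_1, s_2, s_3] at h
  nlinarith [h, mul_le_mul_of_nonneg_left (low_1 hx) hx0, mul_le_mul_of_nonneg_left (low_2 hx) hx0, mul_nonneg hx0 (by linarith : (0:ℝ) ≤ x - 2)]
lemma low_4 {x : ℝ} (hx : 2 ≤ x) : (x/2) * 20 ≤ p 4 x := by
  have hx0 : (0:ℝ) ≤ x := by linarith
  have h := p_rec 3 x
  norm_num [Finset.sum_range_succ, p_zero, s_1, s_2, s_3, s_4] at h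
  nlinarith [h, mul_le_mul_of_nonneg_left (low_1 hx) hx0, mul_le_mul_of_nonneg_left (low_2 hx) hx0, mul_le_mul_of_nonneg_left (low_3 hx) hx0, mul_nonneg hx0 (by linarith : (0:ℝ) ≤ x - 2)]
lemma low_5 {x : ℝ} (hx : 2 ≤ x) : (x/2) * 36 ≤ p 5 x := by
  have hx0 : (0:ℝ) ≤ x := by linarith
  have h := p_rec 4 x
  norm_num [Finset.sum_range_succ, p_zero, s_1, s_2, s_3, s_4, s_5] at h
  nlinarith [h, mul_le_mul_of_nonneg_left (low_1 hx) hx0, mul_le_mul_of_nonneg_left (low_2 hx) hx0, mul_le_mul_of_nonneg_left (low_3 hx) hx0, mul_le_mul_of_nonneg_left (low_4 hx) hx0, mul_nonneg hx0 (by linarith : (0:ℝ) ≤ x - 2)]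
lemma low_6 {x : ℝ} (hx : 2 ≤ x) : (x/2) * 65 ≤ p 6 x := by
  have hx0 : (0:ℝ) ≤ x := by linarith
  have h := p_rec 5 x
  norm_num [Finset.sum_range_succ, p_zero, s_1, s_2, s_3, s_4, s_5, s_6] at h
  nlinarith [h, mul_le_mul_of_nonneg_left (low_1 hx) hx0, mul_le_mul_of_nonneg_left (low_2 hx) hx0, mul_le_mul_of_nonneg_left (low_3 hx) hx0, mul_le_mul_of_nonneg_left (low_4 hx) hx0, mul_le_mul_of_nonneg_left (low_5 hx) hx0, mul_nonneg hx0 (by linarith : (0:ℝ) ≤ x - 2)]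
lemma low_7 {x : ℝ} (hx : 2 ≤ x) : (x/2) * 110 ≤ p 7 x := by
  have hx0 : (0:ℝ) ≤ x := by linarith
  have h := p_rec 6 x
  norm_num [Finset.sum_range_succ, p_zero, s_1, s_2, s_3, s_4, s_5, s_6, s_7] at h
  nlinarith [h, mul_le_mul_of_nonneg_left (low_1 hx) hx0, mul_le_mul_of_nonneg_left (low_2 hx) hx0, mul_le_mul_of_nonneg_left (low_3 hx) hx0, mul_le_mul_of_nonneg_left (low_4 hx) hx0, mul_le_mul_of_nonneg_left (low_5 hx) hx0, mul_le_mul_of_nonneg_left (low_6 hx) hx0, mul_nonneg hx0 (by linarith : (0:ℝ) ≤ x - 2)]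
lemma low_8 {x : ℝ} (hx : 2 ≤ x) : (x/2) * 185 ≤ p 8 x := by
  have hx0 : (0:ℝ) ≤ x := by linarith
  have h := p_rec 7 x
  norm_num [Finset.sum_range_succ, p_zero, s_1, s_2, s_3, s_4, s_5, s_6, s_7, s_8] at h
  nlinarith [h, mul_le_mul_of_nonneg_left (low_1 hx) hx0, mul_le_mul_of_nonneg_left (low_2 hx) hx0, mul_le_mul_of_nonneg_left (low_3 hx) hx0, mul_le_mul_of_nonneg_left (low_4 hx) hx0, mul_le_mul_of_nonneg_left (low_5 hx) hx0, mul_le_mul_of_nonneg_left (low_6 hx) hx0, mul_le_mul_of_nonneg_left (low_7 hx) hx0, mul_nonneg hx0 (by linarith : (0:ℝ) ≤ x - 2)]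
lemma low_9 {x : ℝ} (hx : 2 ≤ x) : (x/2) * 300 ≤ p 9 x := by
  have hx0 : (0:ℝ) ≤ x := by linarith
  have h := p_rec 8 x
  norm_num [Finset.sum_range_succ, p_zero, s_1, s_2, s_3, s_4, s_5, s_6, s_7, s_8, s_9] at h
  nlinarith [h, mul_le_mul_of_nonneg_left (low_1 hx) hx0, mul_le_mul_of_nonneg_left (low_2 hx) hx0, mul_le_mul_of_nonneg_left (low_3 hx) hx0, mul_le_mul_of_nonneg_left (low_4 hx) hx0, mul_le_mul_of_nonneg_left (low_5 hx) hx0, mul_le_mul_of_nonneg_left (low_6 hx) hx0, mul_le_mul_of_nonneg_left (low_7 hx) hx0, mul_le_mul_of_nonneg_left (low_8 hx) hx0, mul_nonneg hx0 (by linarith : (0:ℝ) ≤ x - 2)]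
lemma low_10 {x : ℝ} (hx : 2 ≤ x) : (x/2) * 481 ≤ p 10 x := by
  have hx0 : (0:ℝ) ≤ x := by linarith
  have h := p_rec 9 x
  norm_num [Finset.sum_range_succ, p_zero, s_1, s_2, s_3, s_4, s_5, s_6, s_7, s_8, s_9, s_10] at h
  nlinarith [h, mul_le_mul_of_nonneg_left (low_1 hx) hx0, mul_le_mul_of_nonneg_left (low_2 hx) hx0, mul_le_mul_of_nonneg_left (low_3 hx) hx0, mul_le_mul_of_nonneg_left (low_4 hx) hx0, mul_le_mul_of_nonneg_left (low_5 hx) hx0, mul_le_mul_of_nonneg_left (low_6 hx) hx0, mul_le_mul_of_nonneg_left (low_7 hx) hx0, mul_le_mul_of_nonneg_left (low_8 hx) hx0, mul_le_mul_of_nonneg_left (low_9 hx) hx0, mul_nonneg hx0 (by linarith : (0:ℝ) ≤ x - 2)]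
lemma low_11 {x : ℝ} (hx : 2 ≤ x) : (x/2) * 752 ≤ p 11 x := by
  have hx0 : (0:ℝ) ≤ x := by linarith
  have h := p_rec 10 x
  norm_num [Finset.sum_range_succ, p_zero, s_1, s_2, s_3, s_4, s_5, s_6, s_7, s_8, s_9, s_10, s_11] at h
  nlinarith [h, mul_le_mul_of_nonneg_left (low_1 hx) hx0, mul_le_mul_of_nonneg_left (low_2 hx) hx0, mul_le_mul_of_nonneg_left (low_3 hx) hx0, mul_le_mul_of_nonneg_left (low_4 hx) hx0, mul_le_mul_of_nonneg_left (low_5 hx) hx0, mul_le_mul_of_nonneg_left (low_6 hx) hx0, mul_le_mul_of_nonneg_left (low_7 hx) hx0, mul_le_mul_of_nonneg_left (low_8 hx) hx0, mul_le_mul_of_nonneg_left (low_9 hx) hx0, mul_le_mul_of_nonneg_left (low_10 hx) hx0, mul_nonneg hx0 (by linarith : (0:ℝ) ≤ x - 2)]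
lemma low_12 {x : ℝ} (hx : 2 ≤ x) : (x/2) * 1165 ≤ p 12 x := by
  have hx0 : (0:ℝ) ≤ x := by linarith
  have h := p_rec 11 x
  norm_num [Finset.sum_range_succ, p_zero, s_1, s_2, s_3, s_4, s_5, s_6, s_7, s_8, s_9, s_10, s_11, s_12] at h
  nlinarith [h, mul_le_mul_of_nonneg_left (low_1 hx) hx0, mul_le_mul_of_nonneg_left (low_2 hx) hx0, mul_le_mul_of_nonneg_left (low_3 hx) hx0, mul_le_mul_of_nonneg_left (low_4 hx) hx0, mul_le_mul_of_nonneg_left (low_5 hx) hx0, mul_le_mul_of_nonneg_left (low_6 hx) hx0, mul_le_mul_of_nonneg_left (low_7 hx) hx0, mul_le_mul_of_nonneg_left (low_8 hx) hx0, mul_le_mul_of_nonneg_left (low_9 hx) hx0, mul_le_mul_of_nonneg_left (low_10 hx) hx0, mul_le_mul_of_nonneg_left (low_11 hx) hx0, mul_nonneg hx0 (by linarith : (0:ℝ) ≤ x - 2)]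
lemma low_13 {x : ℝ} (hx : 2 ≤ x) : (x/2) * 1770 ≤ p 13 x := by
  have hx0 : (0:ℝ) ≤ x := by linarith
  have h := p_rec 12 x
  norm_num [Finset.sum_range_succ, p_zero, s_1, s_2, s_3, s_4, s_5, s_6, s_7, s_8, s_9, s_10, s_11, s_12, s_13] at h
  nlinarith [h, mul_le_mul_of_nonneg_left (low_1 hx) hx0, mul_le_mul_of_nonneg_left (low_2 hx) hx0, mul_le_mul_of_nonneg_left (low_3 hx) hx0, mul_le_mul_of_nonneg_left (low_4 hx) hx0, mul_le_mul_of_nonneg_left (low_5 hx) hx0, mul_le_mul_of_nonneg_left (low_6 hx) hx0, mul_le_mul_of_nonneg_left (low_7 hx) hx0, mul_le_mul_of_nonneg_left (low_8 hx) hx0, mul_le_mul_of_nonneg_left (low_9 hx) hx0, mul_le_mul_of_nonneg_left (low_10 hx) hx0, mul_le_mul_of_nonneg_left (low_11 hx) hx0, mul_le_mul_of_nonneg_left (low_12 hx) hx0, mul_nonneg hx0 (by linarith : (0:ℝ) ≤ x - 2)]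
lemma low_14 {x : ℝ} (hx : 2 ≤ x) : (x/2) * 2665 ≤ p 14 x := by
  have hx0 : (0:ℝ) ≤ x := by linarith
  have h := p_rec 13 x
  norm_num [Finset.sum_range_succ, p_zero, s_1, s_2, s_3, s_4, s_5, s_6, s_7, s_8, s_9, s_10, s_11, s_12, s_13, s_14] at h
  nlinarith [h, mul_le_mul_of_nonneg_left (low_1 hx) hx0, mul_le_mul_of_nonneg_left (low_2 hx) hx0, mul_le_mul_of_nonneg_left (low_3 hx) hx0, mul_le_mul_of_nonneg_left (low_4 hx) hx0, mul_le_mul_of_nonneg_left (low_5 hx) hx0, mul_le_mul_of_nonneg_left (low_6 hx) hx0, mul_le_mul_of_nonneg_left (low_7 hx) hx0, mul_le_mul_of_nonneg_left (low_8 hx) hx0, mul_le_mul_of_nonneg_left (low_9 hx) hx0, mul_le_mul_of_nonneg_left (low_10 hx) hx0, mul_le_mul_of_nonneg_left (low_11 hx) hx0, mul_le_mul_of_nonneg_left (low_12 hx) hx0, mul_le_mul_of_nonneg_left (low_13 hx) hx0, mul_nonneg hx0 (by linarith : (0:ℝ) ≤ x - 2)]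
lemma low_15 {x : ℝ} (hx : 2 ≤ x) : (x/2) * 3956 ≤ p 15 x := by
  have hx0 : (0:ℝ) ≤ x := by linarith
  have h := p_rec 14 x
  norm_num [Finset.sum_range_succ, p_zero, s_1, s_2, s_3, s_4, s_5, s_6, s_7, s_8, s_9, s_10, s_11, s_12, s_13, s_14, s_15] at h
  nlinarith [h, mul_le_mul_of_nonneg_left (low_1 hx) hx0, mul_le_mul_of_nonneg_left (low_2 hx) hx0, mul_le_mul_of_nonneg_left (low_3 hx) hx0, mul_le_mul_of_nonneg_left (low_4 hx) hx0, mul_le_mul_of_nonneg_left (low_5 hx) hx0, mul_le_mul_of_nonneg_left (low_6 hx) hx0, mul_le_mul_of_nonneg_left (low_7 hx) hx0, mul_le_mul_of_nonneg_left (low_8 hx) hx0, mul_le_mul_of_nonneg_left (low_9 hx) hx0, mul_le_mul_of_nonneg_left (low_10 hx) hx0, mul_le_mul_of_nonneg_left (low_11 hx) hx0, mul_le_mul_of_nonneg_left (low_12 hx) hx0, mul_le_mul_of_nonneg_left (low_13 hx) hx0, mul_le_mul_of_nonneg_left (low_14 hx) hx0, mul_nonneg hx0 (by linarith : (0:ℝ)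 ≤ x - 2)]
lemma sum_cubes (m : ℕ) : ∑ i ∈ Finset.range m, ((i:ℝ))^3
    = (m:ℝ)^4/4 - (m:ℝ)^3/2 + (m:ℝ)^2/4 := by
  induction m with
  | zero => simp
  | succ t ih => rw [Finset.sum_range_succ, ih]; push_cast; ring

lemma sum_quads (m : ℕ) : ∑ i ∈ Finset.range m, ((i:ℝ))^4
    = (m:ℝ)^5/5 - (m:ℝ)^4/2 + (m:ℝ)^3/3 - (m:ℝ)/30 := by
  induction m with
  | zero => simp
  | succ t ih => rw [Finset.sum_range_succ, ih]; push_cast; ring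


lemma cubic_arith {x M : ℝ} (hx : 2 ≤ x) (hm : 16 ≤ M) :
    M * ((x/2) * (M^3/18)) ≤ x * ((x/2)/18 * (M^5/20 - M^3/12 + M/30)) := by
  have hMpos : (0:ℝ) < M := by linarith
  have a4 : 16 * M^3 ≤ M^4 := by nlinarith [pow_pos hMpos 3]
  have a5 : 16 * M^4 ≤ M^5 := by nlinarith [pow_pos hMpos 4]
  have key2 : M^4 ≤ 2*(M^5/20 - M^3/12 + M/30) := by
    nlinarith [a4, a5, pow_pos hMpos 3, hMpos]
  have hpar : (0:ℝ) ≤ M^5/20 - M^3/12 + M/30 := by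
    nlinarith [key2, pow_pos hMpos 4]
  have h6 : M^4 ≤ x * (M^5/20 - M^3/12 + M/30) := by
    nlinarith [key2, mul_nonneg (by linarith : (0:ℝ) ≤ x - 2) hpar]
  have h7 : (x/36) * M^4 ≤ (x/36) * (x * (M^5/20 - M^3/12 + M/30)) :=
    mul_le_mul_of_nonneg_left h6 (by linarith)
  nlinarith [h7]

lemma low_cubic {x : ℝ} (hx : 2 ≤ x) : ∀ m : ℕ, 1 ≤ m → (x/2) * ((m:ℝ)^3/18) ≤ p m x := by
  intro m
  induction m using Nat.strong_induction_on with
  | _ m ih =>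
    intro hm1
    by_cases hsmall : m ≤ 15
    · have hx2 : (0:ℝ) ≤ x/2 := by linarith
      interval_cases m
      · exact le_trans (by nlinarith) (low_1 hx)
      · exact le_trans (by nlinarith) (low_2 hx)
      · exact le_trans (by nlinarith) (low_3 hx)
      · exact le_trans (by nlinarith) (low_4 hx)
      · exact le_trans (by nlinarith) (low_5 hx)
      · exact le_trans (by nlinarith) (low_6 hx)
      · exact le_trans (by nlinarith) (low_7 hx)
      · exact le_trans (by nlinarith) (low_8 hx)
      · exact le_trans (by nlinarith) (low_9 hx)
      · exact le_trans (by nlinarith) (low_10 hx)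
      · exact le_trans (by nlinarith) (low_11 hx)
      · exact le_trans (by nlinarith) (low_12 hx)
      · exact le_trans (by nlinarith) (low_13 hx)
      · exact le_trans (by nlinarith) (low_14 hx)
      · exact le_trans (by nlinarith) (low_15 hx)
    · push_neg at hsmall
      obtain ⟨t, rfl⟩ : ∃ t, m = t + 1 := ⟨m - 1, by omega⟩
      have ht : 15 ≤ t := by omega
      have hrec := p_rec t x
      have hx0 : (0:ℝ) < x := by linarith
      -- drop the last term
      have hstep1 : ∑ k ∈ Finset.range t, (s (k+1) : ℝ) * p (t - k) x
          ≤ ∑ k ∈ Finset.range (t+1), (s (k+1) : ℝ) * p (t - k) x := by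
        rw [Finset.sum_range_succ]
        have h1 : (0:ℝ) ≤ (s (t+1) : ℝ) := by positivity
        nlinarith [p_pos hx0 0, mul_nonneg h1 (le_of_lt (p_pos hx0 (t - t)))]
      have hstep2 : ∑ k ∈ Finset.range t, ((k:ℝ)+1) * ((x/2) * (((t-k : ℕ):ℝ))^3/18)
          ≤ ∑ k ∈ Finset.range t, (s (k+1) : ℝ) * p (t - k) x := by
        apply Finset.sum_le_sum
        intro k hk
        simp only [Finset.mem_range] at hk
        have hs : ((k:ℝ)+1) ≤ (s (k+1) : ℝ) := by
          have := s_ge_self (k := k+1) (by omega); exact_mod_cast this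
        have hp : (x/2) * (((t-k:ℕ):ℝ))^3/18 ≤ p (t - k) x := by
          have h := ih (t-k) (by omega) (by omega)
          linarith [h]
        have h1 : (0:ℝ) ≤ (x/2) * (((t-k:ℕ):ℝ))^3/18 := by positivity
        have h2 : (0:ℝ) ≤ ((k:ℝ)+1) := by positivity
        exact mul_le_mul hs hp h1 (le_trans h2 hs)
      -- compute the model sum via reflection
      have hrefl : ∑ k ∈ Finset.range t, (((t-k:ℕ):ℝ)) * ((x/2) * (((k+1:ℕ):ℝ))^3/18)
          = ∑ k ∈ Finset.range t, ((k:ℝ)+1) * ((x/2) * (((t-k : ℕ):ℝ))^3/18) := by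
        rw [← Finset.sum_range_reflect (fun k => (((t-k:ℕ):ℝ)) * ((x/2) * (((k+1:ℕ):ℝ))^3/18)) t]
        apply Finset.sum_congr rfl
        intro k hk
        simp only [Finset.mem_range] at hk
        have e1 : t - (t-1-k) = k+1 := by omega
        have e2 : (t-1-k)+1 = t - k := by omega
        rw [e1, e2]
        push_cast [Nat.sub_le]
        ring
      have hval : ∑ k ∈ Finset.range t, (((t-k:ℕ):ℝ)) * ((x/2) * (((k+1:ℕ):ℝ))^3/18)
          = (x/2)/18 * ((((t:ℝ)+1))^5/20 - (((t:ℝ)+1))^3/12 + ((t:ℝ)+1)/30) := by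
        have h1 : ∑ k ∈ Finset.range t, (((t-k:ℕ):ℝ)) * ((x/2) * (((k+1:ℕ):ℝ))^3/18)
            = (x/2)/18 * ∑ k ∈ Finset.range t, (((t:ℝ)+1) * ((k:ℝ)+1)^3 - ((k:ℝ)+1)^4) := by
          rw [Finset.mul_sum]
          apply Finset.sum_congr rfl
          intro k hk
          simp only [Finset.mem_range] at hk
          have : ((t - k : ℕ):ℝ) = (t:ℝ) - (k:ℝ) := by
            push_cast [Nat.cast_sub (le_of_lt hk)]; ring
          rw [this]
          push_cast
          ring
        rw [h1]
        congr 1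
        have h2 : ∑ k ∈ Finset.range t, (((t:ℝ)+1) * ((k:ℝ)+1)^3 - ((k:ℝ)+1)^4)
            = ∑ i ∈ Finset.range (t+1), (((t:ℝ)+1) * ((i:ℝ))^3 - ((i:ℝ))^4) := by
          rw [Finset.sum_range_succ' (fun i => (((t:ℝ)+1) * ((i:ℝ))^3 - ((i:ℝ))^4)) t]
          push_cast
          ring
        rw [h2, Finset.sum_sub_distrib, ← Finset.mul_sum, sum_cubes (t+1), sum_quads (t+1)]
        push_cast
        ring
      -- put together
      have hm : (16:ℝ) ≤ ((t:ℝ)+1) := by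
        have : (15:ℕ) ≤ t := ht
        have : (15:ℝ) ≤ (t:ℝ) := by exact_mod_cast this
        linarith
      have hchain : x * ((x/2)/18 * ((((t:ℝ)+1))^5/20 - (((t:ℝ)+1))^3/12 + ((t:ℝ)+1)/30))
          ≤ ((t:ℝ)+1) * p (t+1) x := by
        rw [hrec]
        have := le_trans (le_of_eq (hval.symm.trans hrefl)) hstep2
        nlinarith [le_trans this hstep1]
      -- final arithmetic: x*(x/2)/18*(M^5/20 - M^3/12 + M/30) ≥ (x/2)*(M^3/18)*M for M ≥ 16
      have hMpos : (0:ℝ) < ((t:ℝ)+1) := by linarith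
      have hfin : ((t:ℝ)+1) * ((x/2) * (((t:ℝ)+1)^3/18)) ≤ ((t:ℝ)+1) * p (t+1) x :=
        le_trans (cubic_arith hx hm) hchain
      have h9 := le_of_mul_le_mul_left hfin hMpos
      have hcast : (((t+1:ℕ)):ℝ) = ((t:ℝ)+1) := by push_cast; ring
      calc (x/2) * (((t+1:ℕ):ℝ)^3/18) = (x/2) * ((((t:ℝ)+1))^3/18) := by rw [hcast]
        _ ≤ p (t+1) x := h9

lemma p_le_of_le {x : ℝ} (hx : 2 ≤ x) {i j : ℕ} (h : i ≤ j) : p i x ≤ p j x := by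
  induction j with
  | zero => simp_all
  | succ t ih =>
    rcases Nat.lt_or_ge i (t+1) with h1 | h1
    · exact le_trans (ih (by omega)) (p_mono hx t)
    · have : i = t+1 := by omega
      subst this; rfl

lemma p_two (x : ℝ) : p 2 x = x*(x+3)/2 := by
  have h := p_rec 1 x
  norm_num [Finset.sum_range_succ, p_zero, p_one, s_1, s_2] at h
  linarith

/-- The key numeric bound: σ(b+1) + σ(b-1) < p_b(x) for b ≥ 2, x > 2,
    stated with b = c+2. -/
lemma sb_bound {x : ℝ} (hx : 2 < x) (c : ℕ) :
    (s (c+3) : ℝ) + (s (c+1) : ℝ) < p (c+2) x := by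
  have hx' : (2:ℝ) ≤ x := le_of_lt hx
  by_cases hc : c ≤ 13
  · -- b = c+2 ≤ 15 : use table. q_b > s(b+1)+s(b-1), and p b ≥ (x/2) q_b > q_b.
    interval_cases c
    · have := low_2 hx'; norm_num [s_3, s_1]; nlinarith [this, hx]
    · have := low_3 hx'; norm_num [s_4, s_2]; nlinarith [this, hx]
    · have := low_4 hx'; norm_num [s_5, s_3]; nlinarith [this, hx]
    · have := low_5 hx'; norm_num [s_6, s_4]; nlinarith [this, hx]
    · have := low_6 hx'; norm_num [s_7, s_5]; nlinarith [this, hx]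
    · have := low_7 hx'; norm_num [s_8, s_6]; nlinarith [this, hx]
    · have := low_8 hx'; norm_num [s_9, s_7]; nlinarith [this, hx]
    · have := low_9 hx'; norm_num [s_10, s_8]; nlinarith [this, hx]
    · have := low_10 hx'; norm_num [s_11, s_9]; nlinarith [this, hx]
    · have := low_11 hx'; norm_num [s_12, s_10]; nlinarith [this, hx]
    · have := low_12 hx'; norm_num [s_13, s_11]; nlinarith [this, hx]
    · have := low_13 hx'; norm_num [s_14, s_12]; nlinarith [this, hx]
    · have := low_14 hx'; norm_num [s_15, s_13]; nlinarith [this, hx]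
    · have := low_15 hx'; norm_num [s_16, s_14]; nlinarith [this, hx]
  · -- b = c+2 ≥ 16 : cubic bound.
    push_neg at hc
    have hb : (16:ℝ) ≤ ((c:ℝ)+2) := by
      have : (14:ℝ) ≤ (c:ℝ) := by exact_mod_cast (by omega : (14:ℕ) ≤ c)
      linarith
    have hlow := low_cubic hx' (c+2) (by omega)
    have h1 := s_le_real (c+3)
    have h2 := s_le_real (c+1)
    have hcast3 : ((c+3:ℕ):ℝ) = (c:ℝ)+3 := by push_cast; ring
    have hcast1 : ((c+1:ℕ):ℝ) = (c:ℝ)+1 := by push_cast; ring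
    have hcast2 : ((c+2:ℕ):ℝ) = (c:ℝ)+2 := by push_cast; ring
    rw [hcast3] at h1
    rw [hcast1] at h2
    rw [hcast2] at hlow
    -- (x/2) * (b^3/18) ≥ b^3/18 > quadratic bound
    have hq : ((c:ℝ)+3)^2/18 + 5*((c:ℝ)+3)/3 + (((c:ℝ)+1)^2/18 + 5*((c:ℝ)+1)/3)
        < ((c:ℝ)+2)^3/18 := by nlinarith [hb]
    have hx2 : (1:ℝ) ≤ x/2 := by linarith
    have hcube : (0:ℝ) < ((c:ℝ)+2)^3/18 := by positivity
    nlinarith [hlow, hq, h1, h2, hcube, hx2]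

/-- The a = 1 case : p (b+1) < x * p b for b ≥ 2 (b = c+2). -/
lemma case_a1 {x : ℝ} (hx : 2 < x) : ∀ c, p (c+3) x < x * p (c+2) x := by
  intro c
  induction c using Nat.strong_induction_on with
  | _ c ih =>
    have hx' : (2:ℝ) ≤ x := le_of_lt hx
    have hx0 : (0:ℝ) < x := by linarith
    have rec1 := p_rec (c+2) x
    rw [Finset.sum_range_succ, Finset.sum_range_succ, Finset.sum_range_succ,
      show c+2-c = 2 from by omega, show c+2-(c+1) = 1 from by omega,
      show c+2-(c+2) = 0 from by omega, p_zero, p_one] at rec1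
    have rec2 := p_rec (c+1) x
    rw [Finset.sum_range_succ, Finset.sum_range_succ,
      show c+1-c = 1 from by omega, show c+1-(c+1) = 0 from by omega,
      p_zero, p_one] at rec2
    have hterm : ∑ k ∈ Finset.range c, (s (k+1) : ℝ) * p (c+2-k) x
        ≤ x * ∑ k ∈ Finset.range c, (s (k+1) : ℝ) * p (c+1-k) x := by
      rw [Finset.mul_sum]
      apply Finset.sum_le_sum
      intro k hk
      simp only [Finset.mem_range] at hk
      have e1 : c+2-k = (c-1-k)+3 := by omega
      have e2 : c+1-k = (c-1-k)+2 := by omega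
      have hIH := ih (c-1-k) (by omega)
      rw [e1, e2]
      have hs0 : (0:ℝ) ≤ (s (k+1) : ℝ) := by positivity
      nlinarith [hIH, hs0]
    have hp2 : p 2 x - x*x ≤ 1 := by rw [p_two]; nlinarith
    have hsb := sb_bound hx c
    have hs1 : (0:ℝ) ≤ (s (c+1) : ℝ) := by positivity
    have w1 : (s (c+1) : ℝ)*(p 2 x - x*x) ≤ (s (c+1) : ℝ) := by nlinarith [hp2, hs1]
    have w3 : x*((s (c+2+1):ℝ) + (s (c+1):ℝ)*(p 2 x - x*x)) < x * p (c+2) x := by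
      apply mul_lt_mul_of_pos_left _ hx0
      have : ((c+2+1:ℕ)) = c+3 := by omega
      rw [this]
      linarith [w1, hsb]
    have m1x := mul_le_mul_of_nonneg_left hterm hx0.le
    have hrec2x : x * ((((c+1:ℕ):ℝ))+1) * p (c+1+1) x
        = x * (x * (∑ k ∈ Finset.range c, (s (k+1) : ℝ) * p (c+1-k) x
            + (s (c+1) : ℝ) * x + (s (c+1+1) : ℝ) * 1)) := by
      rw [mul_assoc, rec2]
    have hfinal : (((c:ℝ))+3) * p (c+3) x < (((c:ℝ))+3) * (x * p (c+2) x) := by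
      have e12 : (c:ℕ)+1+1 = c+2 := by omega
      have e13 : (c:ℕ)+2+1 = c+3 := by omega
      rw [e13] at rec1
      rw [e12] at hrec2x
      push_cast at rec1 hrec2x
      nlinarith [rec1, hrec2x, m1x, w3]
    have hc3 : (0:ℝ) < ((c:ℝ))+3 := by positivity
    exact lt_of_mul_lt_mul_left hfinal hc3.le

lemma p_le_of_le' {x : ℝ} (hx : 2 ≤ x) {i j : ℕ} (h : i ≤ j) : p i x ≤ p j x := by
  induction j with
  | zero => simp_all
  | succ t ih =>
    rcases Nat.lt_or_ge i (t+1) with h1 | h1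
    · exact le_trans (ih (by omega)) (p_mono hx t)
    · have : i = t+1 := by omega
      subst this; rfl

lemma pb_gt {x : ℝ} (hx : 2 < x) {b : ℕ} (hb : 6 ≤ b) :
    x * (2*(b:ℝ)^2/9 + 10*(b:ℝ)/3) < p b x := by
  have hx' : (2:ℝ) ≤ x := le_of_lt hx
  have hx0 : (0:ℝ) < x := by linarith
  by_cases hbs : b ≤ 15
  · interval_cases b
    · norm_num; nlinarith [low_6 hx']
    · norm_num; nlinarith [low_7 hx']
    · norm_num; nlinarith [low_8 hx']
    · norm_num; nlinarith [low_9 hx']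
    · norm_num; nlinarith [low_10 hx']
    · norm_num; nlinarith [low_11 hx']
    · norm_num; nlinarith [low_12 hx']
    · norm_num; nlinarith [low_13 hx']
    · norm_num; nlinarith [low_14 hx']
    · norm_num; nlinarith [low_15 hx']
  · push_neg at hbs
    have hlow := low_cubic hx' b (by omega)
    have hb16 : (16:ℝ) ≤ (b:ℝ) := by exact_mod_cast (by omega : (16:ℕ) ≤ b)
    have hb2 : 16*(b:ℝ) ≤ (b:ℝ)^2 := by nlinarith [hb16]
    have hb3 : 16*(b:ℝ)^2 ≤ (b:ℝ)^3 := by nlinarith [hb16, sq_nonneg ((b:ℝ))]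
    have hpoly : (0:ℝ) < (b:ℝ)^3/36 - (2*(b:ℝ)^2/9 + 10*(b:ℝ)/3) := by
      nlinarith [hb2, hb3, hb16]
    have := mul_pos hx0 hpoly
    nlinarith [this, hlow]

lemma tail_big {x : ℝ} (hx : 2 < x) {a b : ℕ} (ha : 2 ≤ a) (hab : a ≤ b) (hb : 6 ≤ b) :
    x * ∑ k ∈ Finset.Ico b (a+b), (s (k+1) : ℝ) * p (a+b-1-k) x
      < (a:ℝ) * p a x * p b x := by
  have hx' : (2:ℝ) ≤ x := le_of_lt hx
  have hx0 : (0:ℝ) < x := by linarith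
  have hpa1 : 0 < p (a-1) x := p_pos hx0 _
  have h1 : ∑ k ∈ Finset.Ico b (a+b), (s (k+1) : ℝ) * p (a+b-1-k) x
      ≤ ∑ _k ∈ Finset.Ico b (a+b), (2*(b:ℝ)^2/9 + 10*(b:ℝ)/3) * p (a-1) x := by
    apply Finset.sum_le_sum
    intro k hk
    simp only [Finset.mem_Ico] at hk
    have hsC : (s (k+1) : ℝ) ≤ 2*(b:ℝ)^2/9 + 10*(b:ℝ)/3 := by
      have h := s_le_real (k+1)
      have hk2 : ((k+1:ℕ):ℝ) ≤ 2*(b:ℝ) := by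
        have : (k+1:ℕ) ≤ 2*b := by omega
        exact_mod_cast this
      have hk0 : (0:ℝ) ≤ ((k+1:ℕ):ℝ) := by positivity
      nlinarith [h, hk2, hk0, mul_le_mul_of_nonneg_left hk2 hk0,
        mul_le_mul_of_nonneg_right hk2 (by positivity : (0:ℝ) ≤ 2*(b:ℝ))]
    have hpp : p (a+b-1-k) x ≤ p (a-1) x := p_le_of_le' hx' (by omega)
    have hp0 : 0 < p (a+b-1-k) x := p_pos hx0 _
    have hC0 : (0:ℝ) ≤ 2*(b:ℝ)^2/9 + 10*(b:ℝ)/3 := by positivity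
    exact mul_le_mul hsC hpp hp0.le hC0
  have h2 : ∑ _k ∈ Finset.Ico b (a+b), (2*(b:ℝ)^2/9 + 10*(b:ℝ)/3) * p (a-1) x
      = (a:ℝ) * ((2*(b:ℝ)^2/9 + 10*(b:ℝ)/3) * p (a-1) x) := by
    rw [Finset.sum_const, Nat.card_Ico, nsmul_eq_mul]
    congr 2
    omega
  rw [h2] at h1
  have h3 := mul_le_mul_of_nonneg_left h1 hx0.le
  have hpb := pb_gt hx hb
  have ha0 : (0:ℝ) < (a:ℝ) := by exact_mod_cast (by omega : 0 < a)
  have h4 : x * ((a:ℝ) * ((2*(b:ℝ)^2/9 + 10*(b:ℝ)/3) * p (a-1) x))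
      < (a:ℝ) * p a x * p b x := by
    have e : x * ((a:ℝ) * ((2*(b:ℝ)^2/9 + 10*(b:ℝ)/3) * p (a-1) x))
        = (a:ℝ) * p (a-1) x * (x * (2*(b:ℝ)^2/9 + 10*(b:ℝ)/3)) := by ring
    rw [e]
    have h5 : (a:ℝ) * p (a-1) x * (x * (2*(b:ℝ)^2/9 + 10*(b:ℝ)/3))
        < (a:ℝ) * p (a-1) x * p b x :=
      mul_lt_mul_of_pos_left hpb (mul_pos ha0 hpa1)
    have h6 : (a:ℝ) * p (a-1) x * p b x ≤ (a:ℝ) * p a x * p b x := by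
      have hmono : p (a-1) x ≤ p a x := p_le_of_le' hx' (by omega)
      have hpb0 : 0 < p b x := p_pos hx0 b
      exact mul_le_mul_of_nonneg_right (mul_le_mul_of_nonneg_left hmono ha0.le) hpb0.le
    linarith
  exact lt_of_le_of_lt h3 h4

lemma p_three (x : ℝ) : p 3 x = x*(x^2+9*x+8)/6 := by
  have h := p_rec 2 x
  norm_num [Finset.sum_range_succ, s_1, s_2, s_3, p_zero, p_one, p_two] at h
  linarith

lemma p_four (x : ℝ) : p 4 x = x*(x^3+18*x^2+59*x+42)/24 := by
  have h := p_rec 3 x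
  norm_num [Finset.sum_range_succ, s_1, s_2, s_3, s_4, p_zero, p_one, p_two, p_three] at h
  linarith

lemma p_five (x : ℝ) : p 5 x = x*(x^4+30*x^3+215*x^2+450*x+144)/120 := by
  have h := p_rec 4 x
  norm_num [Finset.sum_range_succ, s_1, s_2, s_3, s_4, s_5, p_zero, p_one, p_two, p_three,
    p_four] at h
  linarith


lemma tail_bound {x : ℝ} (hx : 2 < x) {a b : ℕ} (ha : 2 ≤ a) (hab : a ≤ b) :
    x * ∑ k ∈ Finset.Ico b (a+b), (s (k+1) : ℝ) * p (a+b-1-k) x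
      < (a:ℝ) * p a x * p b x := by
  by_cases hb : 6 ≤ b
  · exact tail_big hx ha hab hb
  · push_neg at hb
    have hb5 : b ≤ 5 := by omega
    have ha5 : a ≤ 5 := by omega
    have hy : (0:ℝ) < x - 2 := by linarith
    interval_cases a
    all_goals interval_cases b
    all_goals (
      rw [Finset.sum_Ico_eq_sum_range]
      norm_num [Finset.sum_range_succ, s_3, s_4, s_5, s_6, s_7, s_8, s_9, s_10,
        p_zero, p_one, p_two, p_three, p_four, p_five]
      nlinarith [pow_pos hy 1, pow_pos hy 2, pow_pos hy 3, pow_pos hy 4, pow_pos hy 5])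

lemma step {x : ℝ} (hx : 2 < x) {a b : ℕ} (ha : 1 ≤ a) (hord : a ≤ b) (hn : 2 < a + b)
    (IH : ∀ a' b' : ℕ, 1 ≤ a' → 1 ≤ b' → 2 < a'+b' → a'+b' < a+b →
      p (a'+b') x < p a' x * p b' x) :
    p (a+b) x < p a x * p b x := by
  have hx0 : (0:ℝ) < x := by linarith
  rcases eq_or_lt_of_le ha with h1 | h2
  · -- a = 1
    obtain ⟨c, rfl⟩ : ∃ c, b = c + 2 := ⟨b - 2, by omega⟩
    have := case_a1 hx c
    rw [← h1, p_one]
    have e : 1 + (c+2) = c + 3 := by omega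
    rw [e]
    exact this
  · -- a ≥ 2
    have ha2 : 2 ≤ a := h2
    have hb1 : 1 ≤ b := le_trans ha hord
    -- recurrence at n = a+b
    have hrecn' : ((a:ℝ)+(b:ℝ)) * p (a+b) x
        = x * ∑ k ∈ Finset.range (a+b), (s (k+1) : ℝ) * p (a+b-1-k) x := by
      have h := p_rec (a+b-1) x
      rw [show (a+b-1)+1 = a+b from by omega] at h
      have hc : ((a+b-1:ℕ):ℝ) + 1 = (a:ℝ)+(b:ℝ) := by
        have : ((a+b-1)+1 : ℕ) = a + b := by omega
        exact_mod_cast congrArg (Nat.cast : ℕ → ℝ) this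
      rw [hc] at h
      exact h
    -- split the sum
    have hbn : b ≤ a+b := by omega
    have hsplit : ∑ k ∈ Finset.range (a+b), (s (k+1) : ℝ) * p (a+b-1-k) x
        = ∑ k ∈ Finset.range b, (s (k+1) : ℝ) * p (a+b-1-k) x
          + ∑ k ∈ Finset.Ico b (a+b), (s (k+1) : ℝ) * p (a+b-1-k) x :=
      (Finset.sum_range_add_sum_Ico _ hbn).symm
    -- head bound
    have hhead : ∑ k ∈ Finset.range b, (s (k+1):ℝ) * p (a+b-1-k) x
        ≤ ∑ k ∈ Finset.range b, (s (k+1):ℝ) * (p a x * p (b-1-k) x) := by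
      apply Finset.sum_le_sum
      intro k hk
      simp only [Finset.mem_range] at hk
      have hs0 : (0:ℝ) ≤ (s (k+1) : ℝ) := by positivity
      by_cases hkb : k = b-1
      · subst hkb
        rw [show a+b-1-(b-1) = a from by omega, show b-1-(b-1) = 0 from by omega,
          p_zero, mul_one]
      · have h1 : 1 ≤ b-1-k := by omega
        rw [show a+b-1-k = a + (b-1-k) from by omega]
        have hIH := IH a (b-1-k) (by omega) h1 (by omega) (by omega)
        exact mul_le_mul_of_nonneg_left hIH.le hs0
    -- recurrence at b
    have hrecb := p_rec (b-1) x
    have hb_nat : (b-1)+1 = b := by omega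
    have hb_cast : ((b-1:ℕ):ℝ) + 1 = (b:ℝ) := by
      have : ((b-1)+1 : ℕ) = b := hb_nat
      exact_mod_cast congrArg (Nat.cast : ℕ → ℝ) this
    rw [hb_nat, hb_cast] at hrecb
    -- hrecb : (b:ℝ) * p b x = x * ∑ k ∈ range b, s(k+1) * p (b-1-k) x
    have hxhead : x * ∑ k ∈ Finset.range b, (s (k+1):ℝ) * p (a+b-1-k) x
        ≤ p a x * ((b:ℝ) * p b x) := by
      have h2' := mul_le_mul_of_nonneg_left hhead hx0.le
      have e : x * ∑ k ∈ Finset.range b, (s (k+1):ℝ) * (p a x * p (b-1-k) x)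
          = p a x * (x * ∑ k ∈ Finset.range b, (s (k+1):ℝ) * p (b-1-k) x) := by
        rw [Finset.mul_sum, Finset.mul_sum, Finset.mul_sum]
        apply Finset.sum_congr rfl
        intro k _
        ring
      rw [e, ← hrecb] at h2'
      exact h2'
    -- tail bound
    have htail := tail_bound hx ha2 hord
    -- combine
    have hcomb : ((a:ℝ)+(b:ℝ)) * p (a+b) x < ((a:ℝ) + (b:ℝ)) * (p a x * p b x) := by
      rw [hrecn', hsplit, mul_add]
      have e : p a x * ((b:ℝ) * p b x) + (a:ℝ) * p a x * p b x
          = ((a:ℝ) + (b:ℝ)) * (p a x * p b x) := by ring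
      linarith [hxhead, htail]
    have hab0 : (0:ℝ) < ((a:ℕ):ℝ) + ((b:ℕ):ℝ) := by
      have h3 : (0:ℝ) < ((a:ℕ):ℝ) := by exact_mod_cast (by omega : 0 < a)
      have h4 : (0:ℝ) ≤ ((b:ℕ):ℝ) := by positivity
      linarith
    exact lt_of_mul_lt_mul_left hcomb hab0.le

theorem key {x : ℝ} (hx : 2 < x) : ∀ n a b : ℕ, a + b = n → 1 ≤ a → 1 ≤ b → 2 < n →
    p n x < p a x * p b x := by
  intro n
  induction n using Nat.strong_induction_on with
  | _ n ih =>
    intro a b hab ha hb hn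
    have IH : ∀ a' b' : ℕ, 1 ≤ a' → 1 ≤ b' → 2 < a'+b' → a'+b' < a+b →
        p (a'+b') x < p a' x * p b' x := by
      intro a' b' ha' hb' h3 hlt
      exact ih (a'+b') (by omega) a' b' rfl ha' hb' h3
    subst hab
    rcases le_total a b with hord | hord
    · exact step hx ha hord hn IH
    · have := step hx hb hord (by omega : 2 < b + a) (by
        intro a' b' ha' hb' h3 hlt
        exact IH a' b' ha' hb' h3 (by omega))
      rw [show b + a = a + b from by omega] at this
      linarith [this, mul_comm (p b x) (p a x), this]


theorem stmt11 (a b : ℕ) (ha : 1 ≤ a) (hb : 1 ≤ b) (hab : 2 < a + b)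
    (x : ℝ) (hx : 2 < x) :
    (P (a + b)).eval x < (P a).eval x * (P b).eval x := by
  exact key hx (a+b) a b rfl ha hb hab
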